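/- Let ℓ be a nonzero linear form in n variables, let s ≥ 1 be an integer, and let p = Σ_{k=1}^{t} g_k² be a sum of squares of real polynomials g_k. If ℓ^{2s} divides p, then ℓ^{s} divides g_k for every k = 1,…,t. -/
import Mathlib
open MvPolynomial

lemma finsupp_single_of_sum_one {n : ℕ} (m : Fin n →₀ ℕ)
    (h1 : ∑ x ∈ m.support, m x = 1) : ∃ i, m = Finsupp.single i 1 := by
  have hle : m.support.card • 1 ≤ ∑ x ∈ m.support, m x :=
    Finset.card_nsmul_le_sum _ _ 1 (fun x hx => Nat.one_le_iff_ne_zero.mpr (Finsupp.mem_support_iff.mp hx))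
  rw [smul_eq_mul, mul_one, h1] at hle
  have hne : m.support.Nonempty := by
    rw [Finset.nonempty_iff_ne_empty]
    intro h
    rw [h] at h1; simp at h1
  have hcard : m.support.card = 1 := le_antisymm hle (Finset.Nonempty.card_pos hne)
  obtain ⟨i, hi⟩ := Finset.card_eq_one.mp hcard
  refine ⟨i, ?_⟩
  have hmi : m i = 1 := by rw [hi, Finset.sum_singleton] at h1; exact h1
  have := (Finsupp.support_eq_singleton.mp hi).2
  rwa [hmi] at this

lemma hom_one_decomp {n : ℕ} (l : MvPolynomial (Fin n) ℝ) (hl : l.IsHomogeneous 1) :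
    l = ∑ i, C (coeff (Finsupp.single i 1) l) * X i := by
  ext m
  rw [coeff_sum]
  simp only [coeff_C_mul, coeff_X']
  by_cases hm : ∃ i, m = Finsupp.single i 1
  · obtain ⟨i, rfl⟩ := hm
    rw [Finset.sum_eq_single i]
    · simp
    · intro j _ hj
      rw [if_neg]
      · ring
      · intro h
        exact hj (by simpa using (Finsupp.single_left_injective one_ne_zero h))
    · simp
  · have h0 : coeff m l = 0 := by
      by_contra h
      have h1 := hl h
      simp [Finsupp.weight, Finsupp.linearCombination, Finsupp.sum] at h1
      exact hm (finsupp_single_of_sum_one m h1)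
    rw [h0]
    symm
    apply Finset.sum_eq_zero
    intro j _
    rw [if_neg]
    · ring
    · intro h
      exact hm ⟨j, h.symm⟩
noncomputable def vmap {n : ℕ} (l : MvPolynomial (Fin n) ℝ) (j : Fin n) (c : ℝ) :
    Fin n → MvPolynomial (Fin n) ℝ :=
  fun i => if i = j then X j - C c⁻¹ * l else X i

lemma dvd_X_sub_vmap {n : ℕ} (l : MvPolynomial (Fin n) ℝ) (j : Fin n) (c : ℝ) (i : Fin n) :
    l ∣ X i - vmap l j c i := by
  unfold vmap
  by_cases h : i = j
  · subst h; simp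
  · simp [h]

lemma aeval_vmap_self {n : ℕ} (l : MvPolynomial (Fin n) ℝ) (hl : l.IsHomogeneous 1)
    (j : Fin n) (c : ℝ) (hc : coeff (Finsupp.single j 1) l = c) (hc0 : c ≠ 0) :
    aeval (vmap l j c) l = 0 := by
  rw [show (aeval (vmap l j c)) l
      = aeval (vmap l j c) (∑ i, C (coeff (Finsupp.single i 1) l) * X i) from
    congrArg _ (hom_one_decomp l hl)]
  rw [map_sum]
  simp only [map_mul, aeval_C, aeval_X, algebraMap_eq]
  have key : ∀ i : Fin n, C (coeff (Finsupp.single i 1) l) * vmap l j c i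
      = C (coeff (Finsupp.single i 1) l) * X i + (if i = j then -l else 0) := by
    intro i
    unfold vmap
    by_cases h : i = j
    · subst h
      rw [if_pos rfl, if_pos rfl, hc, mul_sub, ← mul_assoc, ← C_mul, mul_inv_cancel₀ hc0]
      simp; ring
    · simp [h]
  rw [Finset.sum_congr rfl (fun i _ => key i), Finset.sum_add_distrib,
    Finset.sum_ite_eq' Finset.univ j, if_pos (Finset.mem_univ j),
    ← hom_one_decomp l hl]
  ring

lemma dvd_sub_aeval_vmap {n : ℕ} (l : MvPolynomial (Fin n) ℝ) (j : Fin n) (c : ℝ)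
    (p : MvPolynomial (Fin n) ℝ) : l ∣ p - aeval (vmap l j c) p := by
  induction p using MvPolynomial.induction_on with
  | C a => simp
  | add p q hp hq =>
    have := dvd_add hp hq
    rw [map_add]
    convert this using 1
    ring
  | mul_X p i hp =>
    rw [map_mul, aeval_X]
    have key : p * X i - aeval (vmap l j c) p * vmap l j c i
        = (p - aeval (vmap l j c) p) * X i + aeval (vmap l j c) p * (X i - vmap l j c i) := by
      ring
    rw [key]
    exact dvd_add (Dvd.dvd.mul_right hp _) (Dvd.dvd.mul_left (dvd_X_sub_vmap l j c i) _)

lemma sos_eq_zero {n t : ℕ} (q : Fin t → MvPolynomial (Fin n) ℝ)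
    (h : ∑ k, q k ^ 2 = 0) : ∀ k, q k = 0 := by
  intro k
  apply MvPolynomial.funext
  intro x
  have hx : ∑ i, (eval x (q i)) ^ 2 = 0 := by
    have := congrArg (eval x) h
    simpa using this
  have := (Finset.sum_eq_zero_iff_of_nonneg (fun i _ => sq_nonneg _)).mp hx k (Finset.mem_univ k)
  simpa using pow_eq_zero_iff (two_ne_zero) |>.mp this

lemma dvd_each_of_dvd_sos {n : ℕ} (l : MvPolynomial (Fin n) ℝ)
    (hl0 : l ≠ 0) (hl : l.IsHomogeneous 1)
    (t : ℕ) (g : Fin t → MvPolynomial (Fin n) ℝ)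
    (hdvd : l ∣ ∑ k, g k ^ 2) : ∀ k, l ∣ g k := by
  -- find a variable with nonzero coefficient
  obtain ⟨j, hj⟩ : ∃ j, coeff (Finsupp.single j 1) l ≠ 0 := by
    by_contra h
    push_neg at h
    apply hl0
    rw [hom_one_decomp l hl]
    apply Finset.sum_eq_zero
    intro i _
    rw [h i]; simp
  set c := coeff (Finsupp.single j 1) l with hc
  set π := aeval (R := ℝ) (vmap l j c) with hπ
  have hπl : π l = 0 := aeval_vmap_self l hl j c rfl hj
  have hπsum : ∑ k, (π (g k)) ^ 2 = 0 := by
    obtain ⟨q, hq⟩ := hdvd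
    have : π (∑ k, g k ^ 2) = 0 := by rw [hq, map_mul, hπl, zero_mul]
    rw [map_sum] at this
    simp only [map_pow] at this
    exact this
  intro k
  have h0 : π (g k) = 0 := sos_eq_zero _ hπsum k
  have := dvd_sub_aeval_vmap l j c (g k)
  rwa [← hπ, h0, sub_zero] at this

lemma key_induction {n : ℕ} (l : MvPolynomial (Fin n) ℝ)
    (hl0 : l ≠ 0) (hl : l.IsHomogeneous 1) :
    ∀ (s t : ℕ) (g : Fin t → MvPolynomial (Fin n) ℝ),
      l ^ (2 * s) ∣ ∑ k, g k ^ 2 → ∀ k, l ^ s ∣ g k := by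
  intro s
  induction s with
  | zero => intro t g _ k; simp
  | succ s ih =>
    intro t g hdvd k
    have h1 : l ∣ ∑ k, g k ^ 2 := dvd_trans (dvd_pow_self l (by omega)) hdvd
    have h2 := dvd_each_of_dvd_sos l hl0 hl t g h1
    choose h hh using h2
    have hsum : ∑ k, g k ^ 2 = l ^ 2 * ∑ k, h k ^ 2 := by
      rw [Finset.mul_sum]
      apply Finset.sum_congr rfl
      intro i _
      rw [hh i]; ring
    have h3 : l ^ (2 * s) ∣ ∑ k, h k ^ 2 := by
      have : l ^ 2 * l ^ (2 * s) ∣ l ^ 2 * ∑ k, h k ^ 2 := by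
        rw [← hsum, ← pow_add]
        convert hdvd using 2
        ring
      exact (mul_dvd_mul_iff_left (pow_ne_zero 2 hl0)).mp this
    have h4 := ih t h h3 k
    rw [hh k, pow_succ, mul_comm (l ^ s) l]
    exact mul_dvd_mul_left l h4

/-- A real polynomial is a sum of squares (sos) if it equals a finite sum of squares
of real polynomials. -/
def IsSos {n : ℕ} (p : MvPolynomial (Fin n) ℝ) : Prop :=
  ∃ (k : ℕ) (g : Fin k → MvPolynomial (Fin n) ℝ), p = ∑ i, g i ^ 2

/-- A real polynomial is positive semidefinite (psd) if it takes nonnegative values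
at every real point. -/
def Psd {n : ℕ} (p : MvPolynomial (Fin n) ℝ) : Prop :=
  ∀ x : Fin n → ℝ, 0 ≤ eval x p

/-- If ℓ is a nonzero linear form and ℓ^(2s) divides a sum of squares ∑ gₖ²,
then ℓ^s divides each gₖ. -/
theorem linear_power_divides_sos (n : ℕ) (l : MvPolynomial (Fin n) ℝ)
    (hl0 : l ≠ 0) (hl : l.IsHomogeneous 1) (s : ℕ) (hs : 1 ≤ s)
    (t : ℕ) (g : Fin t → MvPolynomial (Fin n) ℝ)
    (hdvd : l ^ (2 * s) ∣ ∑ k, g k ^ 2) :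
    ∀ k, l ^ s ∣ g k :=
  key_induction l hl0 hl s t g hdvd
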